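/- (Sinkhorn form of the optimal entropic plan.) Let N ≥ 1, ε > 0, let C ∈ ℝ^{N×N} have nonnegative entries, let K := exp(−C/(2ε)) entrywise, and let p, q ∈ Δ^{N−1} have strictly positive entries. If M* minimizes the entropic objective E_ε over the transport polytope Π_N(p,q), then M* has strictly positive entries and there exist vectors u, v ∈ ℝ^N with strictly positive entries such that M*_{ij} = u_i K_{ij} v_j for all i, j. -/

import Mathlib

open scoped BigOperators

/-- The transport polytope `Π_N(p,q)`: nonnegative `N×N` matrices with row sums
`p` and column sums `q`. -/
def transportPolytope {N : ℕ} (p q : Fin N → ℝ) :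
    Set (Matrix (Fin N) (Fin N) ℝ) :=
  {M | (∀ i j, 0 ≤ M i j) ∧ (∀ i, ∑ j, M i j = p i) ∧ (∀ j, ∑ i, M i j = q j)}

/-- The entropic optimal transport objective
`E_ε(M) = Σ_{i,j} ((1/2) C_{ij} M_{ij} + ε M_{ij} log M_{ij})`
(with the convention `0 log 0 = 0`, which holds since `Real.log 0 = 0`). -/
noncomputable def entropicCost {N : ℕ} (ε : ℝ)
    (C M : Matrix (Fin N) (Fin N) ℝ) : ℝ :=
  ∑ i, ∑ j, ((1 / 2) * C i j * M i j + ε * M i j * Real.log (M i j))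

noncomputable def entTerm (ε c x : ℝ) : ℝ := 1 / 2 * c * x + ε * x * Real.log x

def dirM {N : ℕ} (i k j l : Fin N) : Matrix (Fin N) (Fin N) ℝ :=
  fun a b => (if a = i then (1:ℝ) else if a = k then -1 else 0) *
             (if b = j then (1:ℝ) else if b = l then -1 else 0)
lemma mul_log_sub_le {x y : ℝ} (hx : 0 ≤ x) (hy : 0 < y) :
    y * Real.log y - x * Real.log x ≤ (y - x) * (Real.log y + 1) := by
  rcases eq_or_lt_of_le hx with h | hx'
  · simp [← h]
    nlinarith [hy.le]
  · have hlog : Real.log y - Real.log x ≤ y / x - 1 := by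
      have h := Real.log_le_sub_one_of_pos (div_pos hy hx')
      rwa [Real.log_div hy.ne' hx'.ne'] at h
    have h2 : x * (Real.log y - Real.log x) ≤ y - x := by
      have := mul_le_mul_of_nonneg_left hlog hx'.le
      calc x * (Real.log y - Real.log x) ≤ x * (y / x - 1) := this
        _ = y - x := by field_simp
    nlinarith
lemma colfac_sum {N : ℕ} {j l : Fin N} (h : j ≠ l) :
    ∑ b, (if b = j then (1:ℝ) else if b = l then -1 else 0) = 0 := by
  have he : ∀ b : Fin N, (if b = j then (1:ℝ) else if b = l then -1 else 0)
      = (if b = j then (1:ℝ) else 0) + (if b = l then (-1:ℝ) else 0) := by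
    intro b; by_cases h1 : b = j <;> by_cases h2 : b = l <;> simp_all
  rw [Finset.sum_congr rfl fun b _ => he b, Finset.sum_add_distrib]
  simp
lemma dirM_apply_off {N : ℕ} {i k j l a b : Fin N}
    (h : ¬(a = i ∨ a = k) ∨ ¬(b = j ∨ b = l)) : dirM i k j l a b = 0 := by
  rcases h with h | h <;> push_neg at h <;> simp [dirM, h.1, h.2]
lemma sum_four {N : ℕ} {i k j l : Fin N} (hik : i ≠ k) (hjl : j ≠ l)
    (f : Fin N → Fin N → ℝ)
    (h0 : ∀ a b, (¬(a = i ∨ a = k) ∨ ¬(b = j ∨ b = l)) → f a b = 0) :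
    ∑ a, ∑ b, f a b = f i j + f i l + (f k j + f k l) := by
  have hinner : ∀ a : Fin N, ∑ b, f a b = f a j + f a l := by
    intro a
    rw [← Finset.sum_subset (Finset.subset_univ ({j, l} : Finset (Fin N)))
      (fun b _ hb => by
        apply h0; right
        simpa [Finset.mem_insert, Finset.mem_singleton] using hb)]
    exact Finset.sum_pair hjl
  rw [Finset.sum_congr rfl fun a _ => hinner a]
  rw [← Finset.sum_subset (Finset.subset_univ ({i, k} : Finset (Fin N)))
    (fun a _ ha => by
      have h : ¬(a = i ∨ a = k) := by
        simpa [Finset.mem_insert, Finset.mem_singleton] using ha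
      rw [h0 a j (Or.inl h), h0 a l (Or.inl h)]; ring)]
  exact Finset.sum_pair hik
lemma cost_diff {N : ℕ} (ε : ℝ) (C M : Matrix (Fin N) (Fin N) ℝ)
    {i k j l : Fin N} (hik : i ≠ k) (hjl : j ≠ l) (t : ℝ) :
    entropicCost ε C (fun a b => M a b + t * dirM i k j l a b)
      = entropicCost ε C M
        + (entTerm ε (C i j) (M i j + t) - entTerm ε (C i j) (M i j))
        + (entTerm ε (C i l) (M i l - t) - entTerm ε (C i l) (M i l))
        + (entTerm ε (C k j) (M k j - t) - entTerm ε (C k j) (M k j))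
        + (entTerm ε (C k l) (M k l + t) - entTerm ε (C k l) (M k l)) := by
  have key : entropicCost ε C (fun a b => M a b + t * dirM i k j l a b)
      - entropicCost ε C M
      = ∑ a, ∑ b, (entTerm ε (C a b) (M a b + t * dirM i k j l a b)
          - entTerm ε (C a b) (M a b)) := by
    unfold entropicCost
    rw [← Finset.sum_sub_distrib]
    refine Finset.sum_congr rfl fun a _ => ?_
    rw [← Finset.sum_sub_distrib]
    rfl
  have h4 := sum_four hik hjl
    (fun a b => entTerm ε (C a b) (M a b + t * dirM i k j l a b)
        - entTerm ε (C a b) (M a b))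
    (fun a b h => by rw [dirM_apply_off h]; simp)
  rw [h4] at key
  have e1 : dirM i k j l i j = 1 := by simp [dirM]
  have e2 : dirM i k j l i l = -1 := by simp [dirM, hjl.symm]
  have e3 : dirM i k j l k j = -1 := by simp [dirM, hik.symm]
  have e4 : dirM i k j l k l = 1 := by simp [dirM, hik.symm, hjl.symm]
  rw [e1, e2, e3, e4] at key
  simp only [mul_one, mul_neg_one] at key
  simp only [← sub_eq_add_neg] at key
  linarith [key]
lemma perturb_mem {N : ℕ} {p q : Fin N → ℝ} {M : Matrix (Fin N) (Fin N) ℝ}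
    (hfeas : M ∈ transportPolytope p q) {i k j l : Fin N}
    (hik : i ≠ k) (hjl : j ≠ l) {t : ℝ}
    (h1 : 0 ≤ M i j + t) (h2 : 0 ≤ M i l - t) (h3 : 0 ≤ M k j - t)
    (h4 : 0 ≤ M k l + t) :
    (fun a b => M a b + t * dirM i k j l a b) ∈ transportPolytope p q := by
  obtain ⟨hnn, hrow, hcol⟩ := hfeas
  refine ⟨?_, ?_, ?_⟩
  · intro a b
    by_cases ha : a = i ∨ a = k
    · by_cases hb : b = j ∨ b = l
      · rcases ha with rfl | rfl <;> rcases hb with rfl | rfl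
        · simpa [dirM] using h1
        · simpa [dirM, hjl.symm, sub_eq_add_neg] using h2
        · simpa [dirM, hik.symm, sub_eq_add_neg] using h3
        · simpa [dirM, hik.symm, hjl.symm] using h4
      · dsimp only; rw [dirM_apply_off (Or.inr hb)]; simpa using hnn a b
    · dsimp only; rw [dirM_apply_off (Or.inl ha)]; simpa using hnn a b
  · intro a
    rw [Finset.sum_add_distrib]
    have : ∑ b, t * dirM i k j l a b = 0 := by
      simp only [dirM]
      rw [← Finset.mul_sum]
      conv_lhs => rw [show (∑ b, (if a = i then (1:ℝ) else if a = k then -1 else 0) *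
        (if b = j then (1:ℝ) else if b = l then -1 else 0))
        = (if a = i then (1:ℝ) else if a = k then -1 else 0) *
          ∑ b, (if b = j then (1:ℝ) else if b = l then -1 else 0) from by
          rw [Finset.mul_sum]]
      rw [colfac_sum hjl]
      ring
    rw [this, add_zero, hrow a]
  · intro b
    rw [Finset.sum_add_distrib]
    have : ∑ a, t * dirM i k j l a b = 0 := by
      simp only [dirM]
      have : ∀ a : Fin N, t * ((if a = i then (1:ℝ) else if a = k then -1 else 0) *
          (if b = j then (1:ℝ) else if b = l then -1 else 0))
          = (t * (if b = j then (1:ℝ) else if b = l then -1 else 0)) *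
            (if a = i then (1:ℝ) else if a = k then -1 else 0) := by
        intro a; ring
      rw [Finset.sum_congr rfl fun a _ => this a, ← Finset.mul_sum, colfac_sum hik]
      ring
    rw [this, add_zero, hcol b]
lemma hasDerivAt_entTerm_add (ε c m : ℝ) (hm : m ≠ 0) :
    HasDerivAt (fun t => entTerm ε c (m + t))
      (1 / 2 * c + ε * (Real.log m + 1)) 0 := by
  have h1 : HasDerivAt (fun t : ℝ => m + t) 1 0 := (hasDerivAt_id 0).const_add m
  have h2 : HasDerivAt (fun x : ℝ => x * Real.log x) (Real.log m + 1) m :=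
    Real.hasDerivAt_mul_log hm
  have h2' : HasDerivAt (fun x : ℝ => x * Real.log x) (Real.log m + 1)
      ((fun t : ℝ => m + t) 0) := by simpa using h2
  have h3 : HasDerivAt (fun t : ℝ => (m + t) * Real.log (m + t)) (Real.log m + 1) 0 := by
    have := h2'.comp (0:ℝ) h1
    simpa [Function.comp_def] using this
  have := ((h1.const_mul (1 / 2 * c)).add (h3.const_mul ε))
  convert this using 1
  · rfl
  · rfl
  · funext t; simp [entTerm]; ring
  · ring
lemma hasDerivAt_entTerm_sub (ε c m : ℝ) (hm : m ≠ 0) :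
    HasDerivAt (fun t => entTerm ε c (m - t))
      (-(1 / 2 * c + ε * (Real.log m + 1))) 0 := by
  have h1 : HasDerivAt (fun t : ℝ => m - t) (-1) 0 := (hasDerivAt_id 0).const_sub m
  have h2 : HasDerivAt (fun x : ℝ => x * Real.log x) (Real.log m + 1) m :=
    Real.hasDerivAt_mul_log hm
  have h2' : HasDerivAt (fun x : ℝ => x * Real.log x) (Real.log m + 1)
      ((fun t : ℝ => m - t) 0) := by simpa using h2
  have h3 : HasDerivAt (fun t : ℝ => (m - t) * Real.log (m - t)) ((Real.log m + 1) * (-1)) 0 := by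
    have := h2'.comp (0:ℝ) h1
    simpa [Function.comp_def] using this
  have := ((h1.const_mul (1 / 2 * c)).add (h3.const_mul ε))
  convert this using 1
  · rfl
  · rfl
  · funext t; simp [entTerm]; ring
  · ring
lemma entropic_perturb_contra (ε c1 c2 c3 c4 a b c : ℝ) (hε : 0 < ε)
    (hc1 : 0 ≤ c1) (hc2 : 0 ≤ c2) (hc3 : 0 ≤ c3) (hc4 : 0 ≤ c4)
    (ha : 0 < a) (hb : 0 < b) (hc : 0 ≤ c)
    (H : ∀ t : ℝ, 0 < t → t ≤ a/2 → t ≤ b/2 → t ≤ 1 →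
      0 ≤ (entTerm ε c1 t - entTerm ε c1 0)
        + (entTerm ε c2 (a - t) - entTerm ε c2 a)
        + (entTerm ε c3 (b - t) - entTerm ε c3 b)
        + (entTerm ε c4 (c + t) - entTerm ε c4 c)) : False := by
  obtain ⟨R, hR_def⟩ : ∃ R : ℝ, R = 1/2*c1 + 1/2*c4 + ε*(|Real.log (a/2)|+1)
      + ε*(|Real.log (b/2)|+1) + ε*(c+1) := ⟨_, rfl⟩
  have claim : ∀ t : ℝ, 0 < t → t ≤ a/2 → t ≤ b/2 → t ≤ 1 →
      Real.log t ≤ -(R/ε) - 1 → False := by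
    intro t ht hta htb ht1 hlt
    have hge := H t ht hta htb ht1
    have hT1 : entTerm ε c1 t - entTerm ε c1 0
        = 1/2*c1*t + ε*(t*Real.log t) := by
      simp [entTerm]; ring
    have hT2 : entTerm ε c2 (a - t) - entTerm ε c2 a
        ≤ ε*(t*(|Real.log (a/2)|+1)) := by
      have hml := mul_log_sub_le (x := a) (y := a - t) (by linarith) (by linarith)
      have hlog : Real.log (a/2) ≤ Real.log (a - t) :=
        Real.log_le_log (by linarith) (by linarith)
      have habs : -Real.log (a/2) ≤ |Real.log (a/2)| := neg_le_abs _
      have hm : -(Real.log (a-t)+1) ≤ |Real.log (a/2)|+1 := by linarith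
      have hm2 := mul_le_mul_of_nonneg_left hm ht.le
      have key : (a - t)*Real.log (a-t) - a*Real.log a ≤ t*(|Real.log (a/2)|+1) := by
        linarith
      have key2 := mul_le_mul_of_nonneg_left key hε.le
      have hCt : 0 ≤ 1/2*c2*t :=
        mul_nonneg (mul_nonneg (by norm_num) hc2) ht.le
      simp only [entTerm]
      linarith [key2, hCt]
    have hT3 : entTerm ε c3 (b - t) - entTerm ε c3 b
        ≤ ε*(t*(|Real.log (b/2)|+1)) := by
      have hml := mul_log_sub_le (x := b) (y := b - t) (by linarith) (by linarith)
      have hlog : Real.log (b/2) ≤ Real.log (b - t) :=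
        Real.log_le_log (by linarith) (by linarith)
      have habs : -Real.log (b/2) ≤ |Real.log (b/2)| := neg_le_abs _
      have hm : -(Real.log (b-t)+1) ≤ |Real.log (b/2)|+1 := by linarith
      have hm2 := mul_le_mul_of_nonneg_left hm ht.le
      have key : (b - t)*Real.log (b-t) - b*Real.log b ≤ t*(|Real.log (b/2)|+1) := by
        linarith
      have key2 := mul_le_mul_of_nonneg_left key hε.le
      have hCt : 0 ≤ 1/2*c3*t :=
        mul_nonneg (mul_nonneg (by norm_num) hc3) ht.le
      simp only [entTerm]
      linarith [key2, hCt]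
    have hT4 : entTerm ε c4 (c + t) - entTerm ε c4 c
        ≤ 1/2*c4*t + ε*(t*(c+1)) := by
      have hml := mul_log_sub_le (x := c) (y := c + t) hc (by linarith)
      have hlog : Real.log (c + t) ≤ (c + t) - 1 :=
        Real.log_le_sub_one_of_pos (by linarith)
      have hm : Real.log (c+t)+1 ≤ c+1 := by linarith
      have hm2 := mul_le_mul_of_nonneg_left hm ht.le
      have key : (c + t)*Real.log (c+t) - c*Real.log c ≤ t*(c+1) := by
        linarith
      have key2 := mul_le_mul_of_nonneg_left key hε.le
      simp only [entTerm]
      linarith [key2]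
    have hfinal : ε*(t*Real.log t) + t*R ≤ -(ε*t) := by
      have h1 : ε*(t*Real.log t) ≤ ε*(t*(-(R/ε)-1)) := by
        apply mul_le_mul_of_nonneg_left _ hε.le
        exact mul_le_mul_of_nonneg_left hlt ht.le
      have h2 : ε*(t*(-(R/ε)-1)) = -(t*R) - ε*t := by
        field_simp
      linarith
    rw [hT1] at hge
    have hRsum : 1/2*c1*t + ε*(t*Real.log t)
        + ε*(t*(|Real.log (a/2)|+1)) + ε*(t*(|Real.log (b/2)|+1))
        + (1/2*c4*t + ε*(t*(c+1)))
        = ε*(t*Real.log t) + t*R := by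
      rw [hR_def]; ring
    linarith [mul_pos hε ht]
  refine claim (min (min (a/2) (b/2)) (min 1 (Real.exp (-(R/ε) - 1)))) ?_ ?_ ?_ ?_ ?_
  · exact lt_min (lt_min (by linarith) (by linarith)) (lt_min one_pos (Real.exp_pos _))
  · exact le_trans (min_le_left _ _) (min_le_left _ _)
  · exact le_trans (min_le_left _ _) (min_le_right _ _)
  · exact le_trans (min_le_right _ _) (min_le_left _ _)
  · have h := Real.log_le_log
      (lt_min (lt_min (by linarith : (0:ℝ) < a/2) (by linarith : (0:ℝ) < b/2))
        (lt_min one_pos (Real.exp_pos _)))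
      (le_trans (min_le_right _ _) (min_le_right _ _) :
        min (min (a/2) (b/2)) (min 1 (Real.exp (-(R/ε) - 1))) ≤ Real.exp (-(R/ε) - 1))
    rwa [Real.log_exp] at h
lemma entropic_pos {N : ℕ} (ε : ℝ) (hε : 0 < ε) (C : Matrix (Fin N) (Fin N) ℝ)
    (hC : ∀ i j, 0 ≤ C i j) (p q : Fin N → ℝ)
    (hppos : ∀ i, 0 < p i) (hqpos : ∀ j, 0 < q j)
    (Mstar : Matrix (Fin N) (Fin N) ℝ)
    (hfeas : Mstar ∈ transportPolytope p q)
    (hmin : ∀ M ∈ transportPolytope p q,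
      entropicCost ε C Mstar ≤ entropicCost ε C M) :
    ∀ i j, 0 < Mstar i j := by
  intro i j
  rcases (hfeas.1 i j).lt_or_eq with h | h
  · exact h
  exfalso
  have hz : Mstar i j = 0 := h.symm
  obtain ⟨l, hl⟩ : ∃ l, 0 < Mstar i l := by
    by_contra h'
    push_neg at h'
    have : ∑ b, Mstar i b = 0 :=
      Finset.sum_eq_zero fun b _ => le_antisymm (h' b) (hfeas.1 i b)
    rw [hfeas.2.1 i] at this
    exact (hppos i).ne' this
  obtain ⟨k, hk⟩ : ∃ k, 0 < Mstar k j := by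
    by_contra h'
    push_neg at h'
    have : ∑ a, Mstar a j = 0 :=
      Finset.sum_eq_zero fun a _ => le_antisymm (h' a) (hfeas.1 a j)
    rw [hfeas.2.2 j] at this
    exact (hqpos j).ne' this
  have hjl : j ≠ l := fun hh => by rw [← hh] at hl; exact hl.ne' hz
  have hik : i ≠ k := fun hh => by rw [← hh] at hk; exact hk.ne' hz
  refine entropic_perturb_contra ε (C i j) (C i l) (C k j) (C k l)
    (Mstar i l) (Mstar k j) (Mstar k l) hε (hC i j) (hC i l) (hC k j) (hC k l)
    hl hk (hfeas.1 k l) ?_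
  intro t ht hta htb ht1
  have hmem := perturb_mem hfeas hik hjl
    (t := t) (by rw [hz]; linarith) (by linarith) (by linarith)
    (by linarith [hfeas.1 k l])
  have hge := hmin _ hmem
  rw [cost_diff ε C Mstar hik hjl t] at hge
  rw [hz] at hge
  rw [zero_add] at hge
  linarith
lemma entropic_stationary {N : ℕ} (ε : ℝ) (hε : 0 < ε)
    (C : Matrix (Fin N) (Fin N) ℝ) (p q : Fin N → ℝ)
    (Mstar : Matrix (Fin N) (Fin N) ℝ)
    (hfeas : Mstar ∈ transportPolytope p q)
    (hmin : ∀ M ∈ transportPolytope p q,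
      entropicCost ε C Mstar ≤ entropicCost ε C M)
    (hpos : ∀ i j, 0 < Mstar i j) :
    ∀ i k j l : Fin N, i ≠ k → j ≠ l →
      (1/2*C i j + ε*Real.log (Mstar i j)) + (1/2*C k l + ε*Real.log (Mstar k l))
        = (1/2*C i l + ε*Real.log (Mstar i l)) + (1/2*C k j + ε*Real.log (Mstar k j)) := by
  intro i k j l hik hjl
  set h : ℝ → ℝ := fun t => entropicCost ε C (fun a b => Mstar a b + t * dirM i k j l a b)
    with hh_def
  -- h is locally minimized at 0
  have hδ : 0 < min (min (Mstar i j) (Mstar i l)) (min (Mstar k j) (Mstar k l)) :=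
    lt_min (lt_min (hpos i j) (hpos i l)) (lt_min (hpos k j) (hpos k l))
  have hloc : IsLocalMin h 0 := by
    have hball : ∀ t ∈ Metric.ball (0:ℝ)
        (min (min (Mstar i j) (Mstar i l)) (min (Mstar k j) (Mstar k l))), h 0 ≤ h t := by
      intro t ht
      rw [Metric.mem_ball, Real.dist_eq, sub_zero] at ht
      have h1 := abs_lt.mp ht
      have e1 : Mstar i j ≥ min (min (Mstar i j) (Mstar i l)) (min (Mstar k j) (Mstar k l)) :=
        le_trans (min_le_left _ _) (min_le_left _ _)
      have e2 : Mstar i l ≥ min (min (Mstar i j) (Mstar i l)) (min (Mstar k j) (Mstar k l)) :=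
        le_trans (min_le_left _ _) (min_le_right _ _)
      have e3 : Mstar k j ≥ min (min (Mstar i j) (Mstar i l)) (min (Mstar k j) (Mstar k l)) :=
        le_trans (min_le_right _ _) (min_le_left _ _)
      have e4 : Mstar k l ≥ min (min (Mstar i j) (Mstar i l)) (min (Mstar k j) (Mstar k l)) :=
        le_trans (min_le_right _ _) (min_le_right _ _)
      have hmem := perturb_mem hfeas hik hjl (t := t)
        (by linarith) (by linarith) (by linarith) (by linarith)
      have h0 : h 0 = entropicCost ε C Mstar := by
        have he : (fun a b => Mstar a b + (0:ℝ) * dirM i k j l a b) = Mstar := by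
          funext a b; ring
        simp only [hh_def]
        rw [he]
      rw [h0]
      exact hmin _ hmem
    exact Filter.eventually_of_mem (Metric.ball_mem_nhds 0 hδ) hball
  -- derivative of h at 0
  have hfun : h = fun t => entropicCost ε C Mstar
      + (entTerm ε (C i j) (Mstar i j + t) - entTerm ε (C i j) (Mstar i j))
      + (entTerm ε (C i l) (Mstar i l - t) - entTerm ε (C i l) (Mstar i l))
      + (entTerm ε (C k j) (Mstar k j - t) - entTerm ε (C k j) (Mstar k j))
      + (entTerm ε (C k l) (Mstar k l + t) - entTerm ε (C k l) (Mstar k l)) :=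
    funext fun t => cost_diff ε C Mstar hik hjl t
  have hd : HasDerivAt h
      ((1/2*C i j + ε*(Real.log (Mstar i j) + 1))
        + (-(1/2*C i l + ε*(Real.log (Mstar i l) + 1)))
        + (-(1/2*C k j + ε*(Real.log (Mstar k j) + 1)))
        + (1/2*C k l + ε*(Real.log (Mstar k l) + 1))) 0 := by
    rw [hfun]
    have d1 := (hasDerivAt_entTerm_add ε (C i j) (Mstar i j) (hpos i j).ne').sub_const
      (entTerm ε (C i j) (Mstar i j))
    have d2 := (hasDerivAt_entTerm_sub ε (C i l) (Mstar i l) (hpos i l).ne').sub_const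
      (entTerm ε (C i l) (Mstar i l))
    have d3 := (hasDerivAt_entTerm_sub ε (C k j) (Mstar k j) (hpos k j).ne').sub_const
      (entTerm ε (C k j) (Mstar k j))
    have d4 := (hasDerivAt_entTerm_add ε (C k l) (Mstar k l) (hpos k l).ne').sub_const
      (entTerm ε (C k l) (Mstar k l))
    exact (((d1.const_add (entropicCost ε C Mstar)).add d2).add d3).add d4
  have hD0 := hloc.hasDerivAt_eq_zero hd
  linarith [hD0]

/-- **Sinkhorn form of the optimal entropic plan.** Let `ε > 0`, let `C` have
nonnegative entries, `K := exp(−C/(2ε))` entrywise, and let `p, q` in the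
simplex have strictly positive entries. If `M*` minimizes `E_ε` over
`Π_N(p,q)`, then `M*` has strictly positive entries and there exist strictly
positive vectors `u, v` with `M*_{ij} = u_i K_{ij} v_j` for all `i, j`. -/
theorem entropic_minimizer_sinkhorn_form {N : ℕ} (hN : 1 ≤ N)
    (ε : ℝ) (hε : 0 < ε) (C : Matrix (Fin N) (Fin N) ℝ)
    (hC : ∀ i j, 0 ≤ C i j)
    (K : Matrix (Fin N) (Fin N) ℝ)
    (hK : K = fun i j => Real.exp (-C i j / (2 * ε)))
    (p q : Fin N → ℝ) (hp : p ∈ stdSimplex ℝ (Fin N))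
    (hq : q ∈ stdSimplex ℝ (Fin N))
    (hppos : ∀ i, 0 < p i) (hqpos : ∀ j, 0 < q j)
    (Mstar : Matrix (Fin N) (Fin N) ℝ)
    (hfeas : Mstar ∈ transportPolytope p q)
    (hmin : ∀ M ∈ transportPolytope p q,
      entropicCost ε C Mstar ≤ entropicCost ε C M) :
    (∀ i j, 0 < Mstar i j) ∧
    ∃ u v : Fin N → ℝ, (∀ i, 0 < u i) ∧ (∀ j, 0 < v j) ∧
      ∀ i j, Mstar i j = u i * K i j * v j := by
  have hpos := entropic_pos ε hε C hC p q hppos hqpos Mstar hfeas hmin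
  have hstat := entropic_stationary ε hε C p q Mstar hfeas hmin hpos
  refine ⟨hpos, ?_⟩
  have hNpos : 0 < N := hN
  set i0 : Fin N := ⟨0, hNpos⟩ with hi0
  have key : ∀ a b : Fin N,
      1/2*C a b + ε*Real.log (Mstar a b)
        = (1/2*C a i0 + ε*Real.log (Mstar a i0))
          + (1/2*C i0 b + ε*Real.log (Mstar i0 b))
          - (1/2*C i0 i0 + ε*Real.log (Mstar i0 i0)) := by
    intro a b
    by_cases ha : a = i0
    · subst ha; ring
    by_cases hb : b = i0
    · subst hb; ring
    have := hstat a i0 b i0 ha hb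
    linarith
  refine ⟨fun i => Real.exp (((1/2*C i i0 + ε*Real.log (Mstar i i0))
      - (1/2*C i0 i0 + ε*Real.log (Mstar i0 i0)))/ε),
    fun j => Real.exp ((1/2*C i0 j + ε*Real.log (Mstar i0 j))/ε),
    fun i => Real.exp_pos _, fun j => Real.exp_pos _, ?_⟩
  intro i j
  have hlog : Real.log (Mstar i j)
      = ((1/2*C i i0 + ε*Real.log (Mstar i i0))
          - (1/2*C i0 i0 + ε*Real.log (Mstar i0 i0)))/ε
        + (-C i j/(2*ε))
        + (1/2*C i0 j + ε*Real.log (Mstar i0 j))/ε := by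
    have hk := key i j
    have hεne : ε ≠ 0 := hε.ne'
    field_simp
    linarith
  calc Mstar i j = Real.exp (Real.log (Mstar i j)) := (Real.exp_log (hpos i j)).symm
    _ = _ := by rw [hlog, Real.exp_add, Real.exp_add, hK]
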